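/- Identifiability of the joint distribution of potential outcomes for a binary outcome (Theorem 1): Suppose two models (Ω, ℱ, μ, G, A, Y⁰, Y¹) and (Ω', ℱ', μ', G', A', Y'⁰, Y'¹) each satisfy Assumption 1, Assumption 2, and Condition 1, and have the same observed data distribution, i.e. μ(G=g, A=a, Y=y) = μ'(G'=g, A'=a, Y'=y) for all g ∈ Fin m and a, y ∈ {0,1}. Then for all a, b ∈ {0,1} and every g ∈ Fin m: P(Y¹=b | Y⁰=a) = P'(Y'¹=b | Y'⁰=a) and P(Y⁰=a, Y¹=b | G=g) = P'(Y'⁰=a, Y'¹=b | G'=g); that is, the conditional distribution P(Y¹ | Y⁰) and the joint distributions P(Y⁰, Y¹ | G=g) are identified from the observed data distribution. -/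

import Mathlib

open MeasureTheory ProbabilityTheory

/-- Conditional probability `P(E | F) = μ(E ∩ F) / μ(F)` as a real number. -/
noncomputable def condP {Ω : Type*} [MeasurableSpace Ω] (μ : Measure Ω) (E F : Set Ω) : ℝ :=
  (μ (E ∩ F)).toReal / (μ F).toReal

lemma toReal_bool_split {Ω : Type*} [MeasurableSpace Ω] (μ : Measure Ω) [IsFiniteMeasure μ]
    (S : Set Ω) {f : Ω → Bool} (hf : Measurable f) :
    (μ S).toReal =
      (μ (S ∩ {ω | f ω = false})).toReal + (μ (S ∩ {ω | f ω = true})).toReal := by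
  have hmeas : MeasurableSet {ω | f ω = true} := hf (measurableSet_singleton true)
  have hdiff : S \ {ω | f ω = true} = S ∩ {ω | f ω = false} := by
    ext ω
    simp only [Set.mem_diff, Set.mem_setOf_eq, Set.mem_inter_iff]
    cases h : f ω <;> simp [h]
  have h := measure_inter_add_diff (μ := μ) S hmeas
  rw [hdiff] at h
  have h2 := congrArg ENNReal.toReal h.symm
  rw [ENNReal.toReal_add (measure_ne_top _ _) (measure_ne_top _ _)] at h2
  linarith

lemma myDivHelper {x y z p : ℝ} (hp : 0 < p) (hz : 0 < z)
    (h : x / p = z / p * (y / p)) : y / p = x / z := by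
  rw [div_eq_div_iff hp.ne' hz.ne']
  field_simp [hp.ne'] at h
  have h2 : x * p = z * y := by
    apply mul_right_cancel₀ hp.ne'
    linear_combination p * h
  linear_combination -h2

lemma aux_model {Ω : Type*} [MeasurableSpace Ω] (μ : Measure Ω) [IsProbabilityMeasure μ]
    {m : ℕ} (G : Ω → Fin m) (A Y0 Y1 Y : Ω → Bool)
    (hAmeas : Measurable A) (hY0meas : Measurable Y0) (hY1meas : Measurable Y1)
    (hYdef : ∀ ω, Y ω = bif A ω then Y1 ω else Y0 ω)
    (hA1pos : ∀ g : Fin m, 0 < μ {ω | G ω = g})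
    (hA1ov : ∀ g : Fin m, 0 < condP μ {ω | A ω = true} {ω | G ω = g} ∧
        condP μ {ω | A ω = true} {ω | G ω = g} < 1)
    (hA1ind : ∀ (g : Fin m) (a y0 y1 : Bool),
      condP μ {ω | A ω = a ∧ Y0 ω = y0 ∧ Y1 ω = y1} {ω | G ω = g} =
        condP μ {ω | A ω = a} {ω | G ω = g} *
          condP μ {ω | Y0 ω = y0 ∧ Y1 ω = y1} {ω | G ω = g})
    (hA2 : ∀ (a b : Bool) (g : Fin m), 0 < μ {ω | Y0 ω = a ∧ G ω = g} →
      condP μ {ω | Y1 ω = b} {ω | Y0 ω = a ∧ G ω = g} =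
        condP μ {ω | Y1 ω = b} {ω | Y0 ω = a})
    (g : Fin m) :
    (∀ a : Bool, condP μ {ω | Y0 ω = a} {ω | G ω = g} =
        (μ {ω | G ω = g ∧ A ω = false ∧ Y ω = a}).toReal /
          ((μ {ω | G ω = g ∧ A ω = false ∧ Y ω = false}).toReal +
           (μ {ω | G ω = g ∧ A ω = false ∧ Y ω = true}).toReal)) ∧
    (∀ b : Bool, condP μ {ω | Y1 ω = b} {ω | G ω = g} =
        (μ {ω | G ω = g ∧ A ω = true ∧ Y ω = b}).toReal /
          ((μ {ω | G ω = g ∧ A ω = true ∧ Y ω = false}).toReal +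
           (μ {ω | G ω = g ∧ A ω = true ∧ Y ω = true}).toReal)) ∧
    (∀ b : Bool, condP μ {ω | Y1 ω = b} {ω | G ω = g} =
        condP μ {ω | Y0 ω = false} {ω | G ω = g} * condP μ {ω | Y1 ω = b} {ω | Y0 ω = false} +
        condP μ {ω | Y0 ω = true} {ω | G ω = g} * condP μ {ω | Y1 ω = b} {ω | Y0 ω = true}) ∧
    (∀ a b : Bool, condP μ {ω | Y0 ω = a ∧ Y1 ω = b} {ω | G ω = g} =
        condP μ {ω | Y0 ω = a} {ω | G ω = g} * condP μ {ω | Y1 ω = b} {ω | Y0 ω = a}) := by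
  have hpg : 0 < (μ {ω | G ω = g}).toReal :=
    ENNReal.toReal_pos (hA1pos g).ne' (measure_ne_top _ _)
  -- F4
  have hF4 : ∀ a b : Bool, condP μ {ω | Y0 ω = a ∧ Y1 ω = b} {ω | G ω = g} =
      condP μ {ω | Y0 ω = a} {ω | G ω = g} * condP μ {ω | Y1 ω = b} {ω | Y0 ω = a} := by
    intro a b
    have hset2 : {ω | Y0 ω = a} ∩ {ω | G ω = g} = {ω | Y0 ω = a ∧ G ω = g} := by
      ext ω; simp [Set.mem_setOf_eq]
    by_cases h0 : μ {ω | Y0 ω = a ∧ G ω = g} = 0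
    · have h1 : μ ({ω | Y0 ω = a ∧ Y1 ω = b} ∩ {ω | G ω = g}) = 0 :=
        measure_mono_null (by rintro ω ⟨⟨h, _⟩, hg⟩; exact ⟨h, hg⟩) h0
      have h2 : μ ({ω | Y0 ω = a} ∩ {ω | G ω = g}) = 0 := by rw [hset2]; exact h0
      simp [condP, h1, h2]
    · have hTpos : 0 < (μ {ω | Y0 ω = a ∧ G ω = g}).toReal :=
        ENNReal.toReal_pos h0 (measure_ne_top _ _)
      have h2 := hA2 a b g (zero_lt_iff.mpr h0)
      have hset1 : {ω | Y1 ω = b} ∩ {ω | Y0 ω = a ∧ G ω = g} =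
          {ω | Y0 ω = a ∧ Y1 ω = b} ∩ {ω | G ω = g} := by
        ext ω; simp only [Set.mem_inter_iff, Set.mem_setOf_eq]; tauto
      unfold condP at h2 ⊢
      rw [hset1] at h2
      rw [← h2, hset2]
      field_simp
  refine ⟨?_, ?_, ?_, hF4⟩
  -- shared facts
  · -- F1
    intro a
    have hobsset : ∀ y : Bool, {ω | G ω = g ∧ A ω = false ∧ Y ω = y} =
        {ω | A ω = false ∧ Y0 ω = y} ∩ {ω | G ω = g} := by
      intro y
      ext ω
      simp only [Set.mem_setOf_eq, Set.mem_inter_iff, hYdef ω]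
      cases hA : A ω <;> simp [hA] <;> tauto
    -- key0 : condP {A=false ∧ Y0=y} {G=g} = cA0 * condP {Y0=y} {G=g}
    have key0 : ∀ y : Bool, condP μ {ω | A ω = false ∧ Y0 ω = y} {ω | G ω = g} =
        condP μ {ω | A ω = false} {ω | G ω = g} * condP μ {ω | Y0 ω = y} {ω | G ω = g} := by
      intro y
      have hs1 := toReal_bool_split μ ({ω | A ω = false ∧ Y0 ω = y} ∩ {ω | G ω = g}) hY1meas
      have hs2 := toReal_bool_split μ ({ω | Y0 ω = y} ∩ {ω | G ω = g}) hY1meas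
      have he1 : ∀ y1 : Bool, ({ω | A ω = false ∧ Y0 ω = y} ∩ {ω | G ω = g}) ∩ {ω | Y1 ω = y1} =
          {ω | A ω = false ∧ Y0 ω = y ∧ Y1 ω = y1} ∩ {ω | G ω = g} := by
        intro y1; ext ω; simp only [Set.mem_inter_iff, Set.mem_setOf_eq]; tauto
      have he2 : ∀ y1 : Bool, ({ω | Y0 ω = y} ∩ {ω | G ω = g}) ∩ {ω | Y1 ω = y1} =
          {ω | Y0 ω = y ∧ Y1 ω = y1} ∩ {ω | G ω = g} := by
        intro y1; ext ω; simp only [Set.mem_inter_iff, Set.mem_setOf_eq]; tauto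
      rw [he1 false, he1 true] at hs1
      rw [he2 false, he2 true] at hs2
      have e1 := hA1ind g false y false
      have e2 := hA1ind g false y true
      unfold condP at e1 e2 ⊢
      rw [hs1, hs2, add_div, add_div, e1, e2]
      ring
    -- cA0 + cA1 = 1
    have hsplitA := toReal_bool_split μ {ω | G ω = g} hAmeas
    have heA : ∀ x : Bool, {ω | G ω = g} ∩ {ω | A ω = x} = {ω | A ω = x} ∩ {ω | G ω = g} := by
      intro x; exact Set.inter_comm _ _
    rw [heA false, heA true] at hsplitA
    have hcA0 : 0 < condP μ {ω | A ω = false} {ω | G ω = g} := by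
      have h1 : condP μ {ω | A ω = false} {ω | G ω = g}
          + condP μ {ω | A ω = true} {ω | G ω = g} = 1 := by
        unfold condP
        rw [← add_div, ← hsplitA]
        field_simp
      linarith [(hA1ov g).2]
    -- denominator equals μ({A=false}∩{G=g})
    have hden : (μ {ω | G ω = g ∧ A ω = false ∧ Y ω = false}).toReal +
        (μ {ω | G ω = g ∧ A ω = false ∧ Y ω = true}).toReal =
        (μ ({ω | A ω = false} ∩ {ω | G ω = g})).toReal := by
      have hs := toReal_bool_split μ ({ω | A ω = false} ∩ {ω | G ω = g}) hY0meas
      have he : ∀ y : Bool, ({ω | A ω = false} ∩ {ω | G ω = g}) ∩ {ω | Y0 ω = y} =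
          {ω | A ω = false ∧ Y0 ω = y} ∩ {ω | G ω = g} := by
        intro y; ext ω; simp only [Set.mem_inter_iff, Set.mem_setOf_eq]; tauto
      rw [he false, he true] at hs
      rw [hobsset false, hobsset true, hs]
    have hdenpos : 0 < (μ ({ω | A ω = false} ∩ {ω | G ω = g})).toReal := by
      unfold condP at hcA0
      rcases div_pos_iff.mp hcA0 with ⟨h, _⟩ | ⟨_, h⟩
      · exact h
      · linarith
    rw [hobsset a, hden]
    have hnum := key0 a
    unfold condP at hnum ⊢
    exact myDivHelper hpg hdenpos hnum
  · -- F2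
    intro b
    have hobsset : ∀ y : Bool, {ω | G ω = g ∧ A ω = true ∧ Y ω = y} =
        {ω | A ω = true ∧ Y1 ω = y} ∩ {ω | G ω = g} := by
      intro y
      ext ω
      simp only [Set.mem_setOf_eq, Set.mem_inter_iff, hYdef ω]
      cases hA : A ω <;> simp [hA] <;> tauto
    have key1 : ∀ y : Bool, condP μ {ω | A ω = true ∧ Y1 ω = y} {ω | G ω = g} =
        condP μ {ω | A ω = true} {ω | G ω = g} * condP μ {ω | Y1 ω = y} {ω | G ω = g} := by
      intro y
      have hs1 := toReal_bool_split μ ({ω | A ω = true ∧ Y1 ω = y} ∩ {ω | G ω = g}) hY0meas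
      have hs2 := toReal_bool_split μ ({ω | Y1 ω = y} ∩ {ω | G ω = g}) hY0meas
      have he1 : ∀ y0 : Bool, ({ω | A ω = true ∧ Y1 ω = y} ∩ {ω | G ω = g}) ∩ {ω | Y0 ω = y0} =
          {ω | A ω = true ∧ Y0 ω = y0 ∧ Y1 ω = y} ∩ {ω | G ω = g} := by
        intro y0; ext ω; simp only [Set.mem_inter_iff, Set.mem_setOf_eq]; tauto
      have he2 : ∀ y0 : Bool, ({ω | Y1 ω = y} ∩ {ω | G ω = g}) ∩ {ω | Y0 ω = y0} =
          {ω | Y0 ω = y0 ∧ Y1 ω = y} ∩ {ω | G ω = g} := by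
        intro y0; ext ω; simp only [Set.mem_inter_iff, Set.mem_setOf_eq]; tauto
      rw [he1 false, he1 true] at hs1
      rw [he2 false, he2 true] at hs2
      have e1 := hA1ind g true false y
      have e2 := hA1ind g true true y
      unfold condP at e1 e2 ⊢
      rw [hs1, hs2, add_div, add_div, e1, e2]
      ring
    have hcA1 := (hA1ov g).1
    have hdenpos : 0 < (μ ({ω | A ω = true} ∩ {ω | G ω = g})).toReal := by
      unfold condP at hcA1
      rcases div_pos_iff.mp hcA1 with ⟨h, _⟩ | ⟨_, h⟩
      · exact h
      · linarith
    have hden : (μ {ω | G ω = g ∧ A ω = true ∧ Y ω = false}).toReal +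
        (μ {ω | G ω = g ∧ A ω = true ∧ Y ω = true}).toReal =
        (μ ({ω | A ω = true} ∩ {ω | G ω = g})).toReal := by
      have hs := toReal_bool_split μ ({ω | A ω = true} ∩ {ω | G ω = g}) hY1meas
      have he : ∀ y : Bool, ({ω | A ω = true} ∩ {ω | G ω = g}) ∩ {ω | Y1 ω = y} =
          {ω | A ω = true ∧ Y1 ω = y} ∩ {ω | G ω = g} := by
        intro y; ext ω; simp only [Set.mem_inter_iff, Set.mem_setOf_eq]; tauto
      rw [he false, he true] at hs
      rw [hobsset false, hobsset true, hs]
    rw [hobsset b, hden]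
    have hnum := key1 b
    unfold condP at hnum ⊢
    exact myDivHelper hpg hdenpos hnum
  · -- F3
    intro b
    have hs := toReal_bool_split μ ({ω | Y1 ω = b} ∩ {ω | G ω = g}) hY0meas
    have he : ∀ a : Bool, ({ω | Y1 ω = b} ∩ {ω | G ω = g}) ∩ {ω | Y0 ω = a} =
        {ω | Y0 ω = a ∧ Y1 ω = b} ∩ {ω | G ω = g} := by
      intro a; ext ω; simp only [Set.mem_inter_iff, Set.mem_setOf_eq]; tauto
    rw [← hF4 false b, ← hF4 true b]
    unfold condP
    rw [he false, he true] at hs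
    rw [hs, add_div]

lemma matrix_inj {m : ℕ} (M : Matrix (Fin m) Bool ℝ) (h : M.rank = 2)
    (v : Bool → ℝ) (hv : M.mulVec v = 0) : v = 0 := by
  have h2 := M.mulVecLin.finrank_range_add_finrank_ker
  rw [Matrix.rank] at h
  rw [h] at h2
  have h3 : Module.finrank ℝ (Bool → ℝ) = 2 := by simp [Module.finrank_pi]
  rw [h3] at h2
  have hk : Module.finrank ℝ (LinearMap.ker M.mulVecLin) = 0 := by omega
  have hker : LinearMap.ker M.mulVecLin = ⊥ := Submodule.finrank_eq_zero.mp hk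
  have hmem : v ∈ LinearMap.ker M.mulVecLin := by
    simp [LinearMap.mem_ker, Matrix.mulVecLin_apply, hv]
  rw [hker] at hmem
  simpa using hmem

/-- **Theorem 1 (binary outcome).** Under trial unconfoundedness (Assumption 1),
transportability of state transition probabilities (Assumption 2), and the full-column
rank condition (Condition 1), the conditional distribution `P(Y¹ | Y⁰)` and the joint
distributions `P(Y⁰, Y¹ | G = g)` are identified from the observed data distribution. -/
theorem stmt0
    {Ω Ω' : Type*} [MeasurableSpace Ω] [MeasurableSpace Ω']
    (μ : Measure Ω) (μ' : Measure Ω')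
    [IsProbabilityMeasure μ] [IsProbabilityMeasure μ']
    {m : ℕ} (hm : 1 ≤ m)
    (G : Ω → Fin m) (A Y0 Y1 Y : Ω → Bool)
    (G' : Ω' → Fin m) (A' Y0' Y1' Y' : Ω' → Bool)
    (hGmeas : Measurable G) (hAmeas : Measurable A)
    (hY0meas : Measurable Y0) (hY1meas : Measurable Y1)
    (hG'meas : Measurable G') (hA'meas : Measurable A')
    (hY0'meas : Measurable Y0') (hY1'meas : Measurable Y1')
    (hYdef : ∀ ω, Y ω = bif A ω then Y1 ω else Y0 ω)
    (hY'def : ∀ ω, Y' ω = bif A' ω then Y1' ω else Y0' ω)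
    -- Assumption 1 for μ
    (hA1pos : ∀ g : Fin m, 0 < μ {ω | G ω = g})
    (hA1ov : ∀ g : Fin m, 0 < condP μ {ω | A ω = true} {ω | G ω = g} ∧
        condP μ {ω | A ω = true} {ω | G ω = g} < 1)
    (hA1ind : ∀ (g : Fin m) (a y0 y1 : Bool),
      condP μ {ω | A ω = a ∧ Y0 ω = y0 ∧ Y1 ω = y1} {ω | G ω = g} =
        condP μ {ω | A ω = a} {ω | G ω = g} *
          condP μ {ω | Y0 ω = y0 ∧ Y1 ω = y1} {ω | G ω = g})
    -- Assumption 1 for μ'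
    (hA1pos' : ∀ g : Fin m, 0 < μ' {ω | G' ω = g})
    (hA1ov' : ∀ g : Fin m, 0 < condP μ' {ω | A' ω = true} {ω | G' ω = g} ∧
        condP μ' {ω | A' ω = true} {ω | G' ω = g} < 1)
    (hA1ind' : ∀ (g : Fin m) (a y0 y1 : Bool),
      condP μ' {ω | A' ω = a ∧ Y0' ω = y0 ∧ Y1' ω = y1} {ω | G' ω = g} =
        condP μ' {ω | A' ω = a} {ω | G' ω = g} *
          condP μ' {ω | Y0' ω = y0 ∧ Y1' ω = y1} {ω | G' ω = g})
    -- Assumption 2 for μ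
    (hA2pos : ∀ a : Bool, 0 < μ {ω | Y0 ω = a})
    (hA2 : ∀ (a b : Bool) (g : Fin m), 0 < μ {ω | Y0 ω = a ∧ G ω = g} →
      condP μ {ω | Y1 ω = b} {ω | Y0 ω = a ∧ G ω = g} =
        condP μ {ω | Y1 ω = b} {ω | Y0 ω = a})
    -- Assumption 2 for μ'
    (hA2pos' : ∀ a : Bool, 0 < μ' {ω | Y0' ω = a})
    (hA2' : ∀ (a b : Bool) (g : Fin m), 0 < μ' {ω | Y0' ω = a ∧ G' ω = g} →
      condP μ' {ω | Y1' ω = b} {ω | Y0' ω = a ∧ G' ω = g} =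
        condP μ' {ω | Y1' ω = b} {ω | Y0' ω = a})
    -- Condition 1 for μ and μ'
    (hC1 : (Matrix.of fun (g : Fin m) (a : Bool) =>
      condP μ {ω | Y0 ω = a} {ω | G ω = g}).rank = 2)
    (hC1' : (Matrix.of fun (g : Fin m) (a : Bool) =>
      condP μ' {ω | Y0' ω = a} {ω | G' ω = g}).rank = 2)
    -- equal observed data distributions
    (hobs : ∀ (g : Fin m) (a y : Bool),
      μ {ω | G ω = g ∧ A ω = a ∧ Y ω = y} = μ' {ω | G' ω = g ∧ A' ω = a ∧ Y' ω = y}) :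
    ∀ (a b : Bool) (g : Fin m),
      condP μ {ω | Y1 ω = b} {ω | Y0 ω = a} =
        condP μ' {ω | Y1' ω = b} {ω | Y0' ω = a} ∧
      condP μ {ω | Y0 ω = a ∧ Y1 ω = b} {ω | G ω = g} =
        condP μ' {ω | Y0' ω = a ∧ Y1' ω = b} {ω | G' ω = g} := by
  
  have H : ∀ g : Fin m, _ := fun g =>
    aux_model μ G A Y0 Y1 Y hAmeas hY0meas hY1meas hYdef hA1pos hA1ov hA1ind hA2 g
  have H' : ∀ g : Fin m, _ := fun g =>
    aux_model μ' G' A' Y0' Y1' Y' hA'meas hY0'meas hY1'meas hY'def hA1pos' hA1ov' hA1ind' hA2' g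
  have hMeq : ∀ (g : Fin m) (x : Bool),
      condP μ {ω | Y0 ω = x} {ω | G ω = g} = condP μ' {ω | Y0' ω = x} {ω | G' ω = g} := by
    intro g x
    rw [(H g).1 x, (H' g).1 x, hobs g false x, hobs g false false, hobs g false true]
  have hreq : ∀ (g : Fin m) (y : Bool),
      condP μ {ω | Y1 ω = y} {ω | G ω = g} = condP μ' {ω | Y1' ω = y} {ω | G' ω = g} := by
    intro g y
    rw [(H g).2.1 y, (H' g).2.1 y, hobs g true y, hobs g true false, hobs g true true]
  have hpieq : ∀ (x y : Bool),
      condP μ {ω | Y1 ω = y} {ω | Y0 ω = x} = condP μ' {ω | Y1' ω = y} {ω | Y0' ω = x} := by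
    intro x y
    have hmv : (Matrix.of fun (g : Fin m) (a : Bool) =>
        condP μ {ω | Y0 ω = a} {ω | G ω = g}).mulVec
        (fun a => condP μ {ω | Y1 ω = y} {ω | Y0 ω = a}
          - condP μ' {ω | Y1' ω = y} {ω | Y0' ω = a}) = 0 := by
      funext g
      have h1 := (H g).2.2.1 y
      have h2 := (H' g).2.2.1 y
      rw [← hreq g y, ← hMeq g false, ← hMeq g true] at h2
      simp only [Matrix.mulVec, dotProduct, Fintype.sum_bool, Matrix.of_apply,
        Pi.zero_apply]
      linear_combination h2 - h1
    have hv0 := matrix_inj _ hC1 _ hmv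
    have := congrFun hv0 x
    simpa [sub_eq_zero] using this
  intro a b g
  refine ⟨hpieq a b, ?_⟩
  rw [(H g).2.2.2 a b, (H' g).2.2.2 a b, hMeq g a, hpieq a b]
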